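/- Let G be a finite connected undirected simple graph and let r ∈ V(G) be a cut vertex whose removal splits G into connected components with vertex sets C_1, …, C_l (l ≥ 2), and let V_i := Σ_{j≠i} |C_j|. Then the total dependency on r satisfies Σ_{s∈V(G)} δ_{s•}(r) ≥ Σ_{i=1}^{l} |C_i| · V_i. -/

import Mathlib

open Finset

/-- Number of shortest paths between `s` and `t`: paths of length `dist s t`. -/
noncomputable def nsp {V : Type*} (G : SimpleGraph V) (s t : V) : ℕ :=
  Nat.card {p : G.Walk s t // p.IsPath ∧ p.length = G.dist s t}

/-- Number of shortest paths between `s` and `t` passing through `x`. -/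
noncomputable def nspThrough {V : Type*} (G : SimpleGraph V) (s t x : V) : ℕ :=
  Nat.card {p : G.Walk s t // (p.IsPath ∧ p.length = G.dist s t) ∧ x ∈ p.support}

/-- Pair dependency δ_{st}(x) = σ_{st}(x)/σ_{st} (zero when x ∈ {s,t};
division by zero gives 0). -/
noncomputable def pairDep {V : Type*} [DecidableEq V] (G : SimpleGraph V)
    (s t x : V) : ℝ :=
  if x = s ∨ x = t then 0 else (nspThrough G s t x : ℝ) / (nsp G s t : ℝ)

/-- Dependency score δ_{s•}(x) = Σ_{t ∉ {s,x}} δ_{st}(x); in particular δ_{x•}(x) = 0. -/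
noncomputable def depScore {V : Type*} [Fintype V] [DecidableEq V]
    (G : SimpleGraph V) (s x : V) : ℝ :=
  ∑ t ∈ Finset.univ \ {s, x}, pairDep G s t x

/-- Betweenness centrality BC(x) = (1/(n(n-1))) Σ_{s ≠ x} δ_{s•}(x). -/
noncomputable def bc {V : Type*} [Fintype V] [DecidableEq V]
    (G : SimpleGraph V) (x : V) : ℝ :=
  (1 / ((Fintype.card V : ℝ) * ((Fintype.card V : ℝ) - 1))) *
    ∑ s ∈ Finset.univ \ {x}, depScore G s x

/-- `C : Fin l → Finset V` is the family of vertex sets of the connected components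
of `G − r`: each `C i` is nonempty, they are pairwise disjoint, they cover
`V(G) ∖ {r}`, and two vertices lie in the same `C i` iff they are joined by a walk
of `G` avoiding `r`. -/
def IsCompFamily {V : Type*} (G : SimpleGraph V) (r : V)
    {l : ℕ} (C : Fin l → Finset V) : Prop :=
  (∀ i, (C i).Nonempty) ∧
  (∀ v : V, v ≠ r ↔ ∃ i, v ∈ C i) ∧
  (∀ i j, i ≠ j → Disjoint (C i) (C j)) ∧
  (∀ i, ∀ u ∈ C i, ∀ v : V, (v ∈ C i ↔ ∃ p : G.Walk u v, r ∉ p.support))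

section aux

variable {V : Type*} [Fintype V] [DecidableEq V] {G : SimpleGraph V}

lemma pairDep_nonneg (s t x : V) : 0 ≤ pairDep G s t x := by
  unfold pairDep
  split
  · exact le_refl _
  · positivity

lemma pairDep_eq_one (hconn : G.Connected) {s t r : V} (hs : r ≠ s) (ht : r ≠ t)
    (hall : ∀ p : G.Walk s t, r ∈ p.support) : pairDep G s t r = 1 := by
  classical
  haveI : DecidableRel G.Adj := Classical.decRel _
  have hne : Nonempty {p : G.Walk s t // p.IsPath ∧ p.length = G.dist s t} := by
    obtain ⟨p, hp⟩ := hconn.exists_path_of_dist s t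
    exact ⟨⟨p, hp⟩⟩
  have hpos : 0 < nsp G s t := Nat.card_pos
  have heq : nspThrough G s t r = nsp G s t := by
    unfold nsp nspThrough
    exact Nat.card_congr (Equiv.subtypeEquivRight fun p => by
      simp only [and_iff_left (hall p)])
  rw [pairDep, if_neg (by push_neg; exact ⟨hs, ht⟩), heq]
  rw [div_self]
  exact_mod_cast hpos.ne'

end aux

/-- the total dependency on the cut vertex r is at least
Σ_i |C_i| · V_i where V_i = Σ_{j≠i} |C_j|. -/
theorem stmt_6 {V : Type*} [Fintype V] [DecidableEq V] (G : SimpleGraph V)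
    (hconn : G.Connected)
    (r : V) {l : ℕ} (hl : 2 ≤ l) (C : Fin l → Finset V)
    (hC : IsCompFamily G r C) :
    ∑ i : Fin l, ((C i).card : ℝ) * (∑ j ∈ Finset.univ \ {i}, ((C j).card : ℝ)) ≤
      ∑ s : V, depScore G s r := by
  obtain ⟨hCne, hcov, hdisj, hwalk⟩ := hC
  -- membership in C i implies ≠ r
  have hner : ∀ i, ∀ v ∈ C i, v ≠ r := fun i v hv => (hcov v).mpr ⟨i, hv⟩
  -- key: if s ∈ C i, t ∈ C j, i ≠ j then pairDep = 1
  have hkey : ∀ i j, i ≠ j → ∀ s ∈ C i, ∀ t ∈ C j, pairDep G s t r = 1 := by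
    intro i j hij s hs t ht
    refine pairDep_eq_one hconn (fun h => hner i s hs h.symm)
      (fun h => hner j t ht h.symm) ?_
    intro p
    by_contra hr
    exact Finset.disjoint_left.mp (hdisj i j hij) ((hwalk i s hs t).mpr ⟨p, hr⟩) ht
  -- depScore lower bound for s ∈ C i
  have hdep : ∀ i, ∀ s ∈ C i,
      (∑ j ∈ Finset.univ \ {i}, ((C j).card : ℝ)) ≤ depScore G s r := by
    intro i s hs
    have hsub : ((Finset.univ \ {i}).biUnion C) ⊆ Finset.univ \ ({s, r} : Finset V) := by
      intro t ht
      simp only [mem_biUnion, mem_sdiff, mem_singleton] at ht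
      obtain ⟨j, ⟨_, hji⟩, htj⟩ := ht
      simp only [mem_sdiff, mem_univ, mem_insert, mem_singleton, true_and]
      push_neg
      constructor
      · rintro rfl
        exact (Finset.disjoint_left.mp (hdisj i j (Ne.symm hji)) hs htj).elim
      · exact hner j t htj
    calc ∑ j ∈ Finset.univ \ {i}, ((C j).card : ℝ)
        = ∑ t ∈ (Finset.univ \ {i}).biUnion C, (1 : ℝ) := by
          rw [Finset.sum_biUnion]
          · simp
          · intro a ha b hb hab
            exact hdisj a b hab
      _ = ∑ t ∈ (Finset.univ \ {i}).biUnion C, pairDep G s t r := by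
          apply Finset.sum_congr rfl
          intro t ht
          simp only [mem_biUnion, mem_sdiff, mem_singleton] at ht
          obtain ⟨j, ⟨_, hji⟩, htj⟩ := ht
          exact (hkey i j (Ne.symm hji) s hs t htj).symm
      _ ≤ depScore G s r :=
          Finset.sum_le_sum_of_subset_of_nonneg hsub
            (fun t _ _ => pairDep_nonneg s t r)
  -- assemble
  have hdepnn : ∀ s : V, 0 ≤ depScore G s r :=
    fun s => Finset.sum_nonneg fun t _ => pairDep_nonneg s t r
  calc ∑ i : Fin l, ((C i).card : ℝ) * (∑ j ∈ Finset.univ \ {i}, ((C j).card : ℝ))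
      = ∑ i : Fin l, ∑ s ∈ C i, (∑ j ∈ Finset.univ \ {i}, ((C j).card : ℝ)) := by
        simp [Finset.sum_const, mul_comm]
        rw [← Finset.sum_sub_distrib]
        simp only [mul_sub]
    _ ≤ ∑ i : Fin l, ∑ s ∈ C i, depScore G s r := by
        apply Finset.sum_le_sum
        intro i _
        exact Finset.sum_le_sum (hdep i)
    _ = ∑ s ∈ Finset.univ.biUnion C, depScore G s r := by
        rw [Finset.sum_biUnion (fun a _ b _ hab => hdisj a b hab)]
    _ ≤ ∑ s : V, depScore G s r :=
        Finset.sum_le_sum_of_subset_of_nonneg (Finset.subset_univ _)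
          (fun s _ _ => hdepnn s)
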